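/- For all integers N > 1, K > 1, and M with 1 ≤ M ≤ K−1, if M+1 does not divide K, then 1 + ∑_{k=1}^{g−1} r_k (N−1)^k < N^{g−1} (as rational numbers), and consequently P_0 := (1 + ∑_{k=1}^{g−1} r_k (N−1)^k)^{−1} satisfies P_0 > N^{1−g}. -/

import Mathlib

open Finset

/-- `g := ⌈K/(M+1)⌉`, the ceiling of the exact rational quotient `K/(M+1)`. -/
def gVal (K M : ℕ) : ℕ := ⌈(K : ℚ) / (M + 1)⌉₊

/-- `r_k := ∏_{j=1}^{k} (K/(M+1) − j)/j` as a rational number. -/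
def rVal (K M : ℕ) (k : ℕ) : ℚ :=
  ∏ j ∈ Finset.Icc 1 k, ((K : ℚ) / (M + 1) - (j : ℚ)) / (j : ℚ)

/-- `P_0 := (1 + ∑_{k=1}^{g−1} r_k (N−1)^k)⁻¹`. -/
def P0Val (N K M : ℕ) : ℚ :=
  (1 + ∑ k ∈ Finset.Icc 1 (gVal K M - 1), rVal K M k * ((N : ℚ) - 1) ^ k)⁻¹

/-- `R := (N−1)/(N − P_0)`. -/
def RVal (N K M : ℕ) : ℚ := ((N : ℚ) - 1) / ((N : ℚ) - P0Val N K M)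

/-- `R* := (N^g − N^{g−1})/(N^g − 1)`. -/
def RstarVal (N K M : ℕ) : ℚ :=
  ((N : ℚ) ^ gVal K M - (N : ℚ) ^ (gVal K M - 1)) / ((N : ℚ) ^ gVal K M - 1)

lemma prod_pos_aux (x : ℚ) (n : ℕ) (h1 : (n:ℚ) < x) (k : ℕ) (hk : k ≤ n) :
    0 < ∏ j ∈ Finset.Icc 1 k, (x - (j:ℚ)) / (j:ℚ) := by
  apply Finset.prod_pos
  intro j hj
  simp only [Finset.mem_Icc] at hj
  have hjn : (j:ℚ) ≤ (n:ℚ) := by exact_mod_cast le_trans hj.2 hk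
  have hj0 : (0:ℚ) < j := by exact_mod_cast hj.1
  exact div_pos (by linarith) hj0

lemma prod_lt_choose_aux (x : ℚ) (n : ℕ) (h1 : (n:ℚ) < x) (h2 : x < (n:ℚ) + 1) :
    ∀ k, 1 ≤ k → k ≤ n →
      (∏ j ∈ Finset.Icc 1 k, (x - (j:ℚ)) / (j:ℚ)) < (n.choose k : ℚ) := by
  intro k
  induction k with
  | zero => intro h; omega
  | succ k ih =>
    intro _ hkn
    rcases Nat.eq_zero_or_pos k with hk0 | hk1
    · subst hk0
      have h1n : (1:ℕ) ≤ 1 := le_refl 1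
      rw [show Finset.Icc 1 1 = {1} from rfl, Finset.prod_singleton]
      have hn1 : 1 ≤ n := hkn
      rw [Nat.choose_one_right]
      push_cast
      have : x - 1 < (n:ℚ) := by linarith
      simpa using this
    · have hkn' : k ≤ n := le_trans (Nat.le_succ k) hkn
      have hP := ih hk1 hkn'
      have hPpos := prod_pos_aux x n h1 k hkn'
      rw [Finset.prod_Icc_succ_top (by omega : 1 ≤ k + 1)]
      have hkq : ((k:ℚ) + 1) ≤ (n:ℚ) := by exact_mod_cast hkn
      have hfpos : 0 < (x - ((k+1:ℕ):ℚ)) / ((k+1:ℕ):ℚ) := by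
        push_cast
        apply div_pos (by linarith) (by positivity)
      have hCpos : (0:ℚ) < (n.choose k : ℚ) := by
        exact_mod_cast Nat.choose_pos hkn'
      have step1 : (∏ j ∈ Finset.Icc 1 k, (x - (j:ℚ)) / (j:ℚ)) * ((x - ((k+1:ℕ):ℚ)) / ((k+1:ℕ):ℚ))
          < (n.choose k : ℚ) * ((x - ((k+1:ℕ):ℚ)) / ((k+1:ℕ):ℚ)) :=
        mul_lt_mul_of_pos_right hP hfpos
      have key : (n.choose (k+1) : ℚ) * ((k:ℚ)+1) = (n.choose k : ℚ) * ((n:ℚ) - k) := by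
        have := Nat.choose_succ_right_eq n k
        have hcast : ((n - k : ℕ) : ℚ) = (n:ℚ) - k := by
          have : k ≤ n := hkn'
          push_cast [this]; ring
        calc (n.choose (k+1) : ℚ) * ((k:ℚ)+1) = ((n.choose (k+1) * (k+1) : ℕ) : ℚ) := by push_cast; ring
        _ = ((n.choose k * (n - k) : ℕ) : ℚ) := by rw [this]
        _ = (n.choose k : ℚ) * ((n:ℚ) - k) := by push_cast [hkn']; ring
      have step2 : (n.choose k : ℚ) * ((x - ((k+1:ℕ):ℚ)) / ((k+1:ℕ):ℚ)) < (n.choose (k+1) : ℚ) := by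
        rw [mul_div_assoc', div_lt_iff₀ (by positivity : (0:ℚ) < ((k+1:ℕ):ℚ))]
        push_cast
        have hx2 : x - ((k:ℚ)+1) < (n:ℚ) - k := by linarith
        nlinarith [key]
      calc _ < (n.choose k : ℚ) * ((x - ((k+1:ℕ):ℚ)) / ((k+1:ℕ):ℚ)) := step1
      _ < _ := step2

/-- if `M+1` does not divide `K`, then
    `1 + ∑_{k=1}^{g−1} r_k (N−1)^k < N^{g−1}` and consequently `P_0 > N^{1−g}`. -/
theorem sum_lt_pow_and_P0_gt_of_not_dvd (N K M : ℕ) (hN : 1 < N) (hK : 1 < K)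
    (hM1 : 1 ≤ M) (hM2 : M ≤ K - 1) (hndvd : ¬ (M + 1) ∣ K) :
    (1 + ∑ k ∈ Finset.Icc 1 (gVal K M - 1), rVal K M k * ((N : ℚ) - 1) ^ k
        < (N : ℚ) ^ (gVal K M - 1)) ∧
      P0Val N K M > ((N : ℚ) ^ (gVal K M - 1))⁻¹ := by
  set x : ℚ := (K : ℚ) / (M + 1) with hxdef
  have hMpos : (0:ℚ) < (M:ℚ) + 1 := by positivity
  have hMK : M + 1 ≤ K := by omega
  -- x not equal to any natural number: x * (M+1) = K
  have hxnat : ∀ m : ℕ, x ≠ (m : ℚ) := by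
    intro m hm
    apply hndvd
    have : (K:ℚ) = (m:ℚ) * ((M:ℚ)+1) := by
      rw [hxdef, div_eq_iff (ne_of_gt hMpos)] at hm
      linarith [hm]
    exact ⟨m, by exact_mod_cast (by push_cast at this ⊢; linarith : (K:ℚ) = ((M+1) * m : ℕ))⟩
  have hx1 : (1:ℚ) < x := by
    have hge : (1:ℚ) ≤ x := by
      rw [le_div_iff₀ hMpos, one_mul]
      have : ((M:ℚ)+1) ≤ (K:ℚ) := by exact_mod_cast hMK
      linarith
    rcases lt_or_eq_of_le hge with h | h
    · exact h
    · exact absurd h.symm (hxnat 1)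
  have hg2 : 2 ≤ gVal K M := by
    have : 1 < ⌈x⌉₊ := by
      rw [Nat.lt_ceil]; exact_mod_cast hx1
    unfold gVal; exact this
  set g := gVal K M with hgdef
  have hgx : g = ⌈x⌉₊ := by rw [hgdef]; rfl
  set n := g - 1 with hndef
  have hgn : g = n + 1 := by omega
  have hn1 : 1 ≤ n := by omega
  have hxle : x ≤ (g:ℚ) := Nat.le_ceil x
  have hxlt : x < (g:ℚ) := lt_of_le_of_ne hxle (hxnat g)
  have hxgt : ((n:ℚ)) < x := by
    have hlt : n < ⌈x⌉₊ := by omega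
    exact_mod_cast Nat.lt_ceil.mp hlt
  have hxlt' : x < (n:ℚ) + 1 := by
    rw [hgn] at hxlt; push_cast at hxlt; linarith
  -- binomial theorem
  have hbin : (N:ℚ) ^ n = 1 + ∑ k ∈ Finset.Icc 1 n, (n.choose k : ℚ) * ((N:ℚ) - 1) ^ k := by
    have hb := add_pow ((N:ℚ) - 1) 1 n
    simp only [sub_add_cancel, one_pow, mul_one] at hb
    rw [hb, Finset.sum_range_succ', ← Finset.Ico_add_one_right_eq_Icc, Finset.sum_Ico_eq_sum_range]
    simp only [Nat.succ_sub_one, pow_zero, one_mul, Nat.choose_zero_right, Nat.cast_one,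
      Nat.add_sub_cancel]
    rw [add_comm]
    congr 1
    apply Finset.sum_congr rfl
    intro i _
    rw [add_comm 1 i]
    ring
  -- term-wise comparison
  have hterm : ∀ k ∈ Finset.Icc 1 n, rVal K M k * ((N:ℚ) - 1) ^ k < (n.choose k : ℚ) * ((N:ℚ) - 1) ^ k := by
    intro k hk
    simp only [Finset.mem_Icc] at hk
    have hr : rVal K M k < (n.choose k : ℚ) :=
      prod_lt_choose_aux x n hxgt hxlt' k hk.1 hk.2
    have hNpos : (0:ℚ) < (N:ℚ) - 1 := by
      have : (1:ℚ) < (N:ℚ) := by exact_mod_cast hN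
      linarith
    exact mul_lt_mul_of_pos_right hr (by positivity)
  have hsum : ∑ k ∈ Finset.Icc 1 n, rVal K M k * ((N:ℚ) - 1) ^ k
      < ∑ k ∈ Finset.Icc 1 n, (n.choose k : ℚ) * ((N:ℚ) - 1) ^ k :=
    Finset.sum_lt_sum_of_nonempty (Finset.nonempty_Icc.mpr hn1) hterm
  have hmain : 1 + ∑ k ∈ Finset.Icc 1 n, rVal K M k * ((N:ℚ) - 1) ^ k < (N:ℚ) ^ n := by
    rw [hbin]; linarith
  refine ⟨hmain, ?_⟩
  -- positivity of the sum
  have hpos : ∀ k ∈ Finset.Icc 1 n, 0 < rVal K M k * ((N:ℚ) - 1) ^ k := by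
    intro k hk
    simp only [Finset.mem_Icc] at hk
    have hr : 0 < rVal K M k := prod_pos_aux x n hxgt k hk.2
    have hNpos : (0:ℚ) < (N:ℚ) - 1 := by
      have : (1:ℚ) < (N:ℚ) := by exact_mod_cast hN
      linarith
    positivity
  have hSpos : 0 < 1 + ∑ k ∈ Finset.Icc 1 n, rVal K M k * ((N:ℚ) - 1) ^ k := by
    have := Finset.sum_pos hpos (Finset.nonempty_Icc.mpr hn1)
    linarith
  have hPow : (0:ℚ) < (N:ℚ) ^ n := by positivity
  rw [P0Val]
  exact inv_strictAnti₀ hSpos hmain
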